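/- Bell's theorem in functional form: there is no probability space (Λ, μ) with measurable functions A, B : S × Λ → {0,1} on the set S = {angles} such that μ( { λ | A(a,λ) ≠ B(b,λ) } ) = sin²(a - b) for all a, b ∈ S, provided S contains three angles a, b, c with pairwise differences violating the triangle-type inequality sin²(a-c) ≤ sin²(a-b) + sin²(b-c) (for example a = 0, b = π/6, c = π/3, where sin²(π/3) = 3/4 > 1/4 + 1/4). -/

import Mathlib

open MeasureTheory

/-- Bell's theorem in functional form.  There is no probability space
`(Λ, μ)` with response functions `A, B : S × Λ → {0,1}` (settings `S = ℝ`, the angles)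
reproducing the quantum-mechanical mismatch probabilities
`μ{λ | A(a,λ) ≠ B(b,λ)} = sin²(a-b)` for all angles `a, b`; e.g. the angles
`0, π/6, π/3` violate the triangle-type inequality
`sin²(a-c) ≤ sin²(a-b) + sin²(b-c)` since `3/4 > 1/4 + 1/4`. -/
theorem bell_theorem_functional {Λ : Type*} [MeasurableSpace Λ]
    (μ : Measure Λ) [IsProbabilityMeasure μ] (A B : ℝ → Λ → Bool) :
    ¬ ∀ a b : ℝ,
        μ {l : Λ | A a l ≠ B b l} = ENNReal.ofReal (Real.sin (a - b) ^ 2) := by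
  intro h
  set a : ℝ := 0
  set b : ℝ := Real.pi / 6
  set c : ℝ := Real.pi / 3
  have hsub : {l : Λ | A a l ≠ B c l} ⊆
      {l : Λ | A a l ≠ B b l} ∪ ({l : Λ | A b l ≠ B c l} ∪ {l : Λ | A b l ≠ B b l}) := by
    intro l hl
    by_contra hcon
    simp only [Set.mem_union, Set.mem_setOf_eq, not_or, not_not] at hcon
    exact hl (hcon.1.trans (hcon.2.2.symm.trans hcon.2.1))
  have hle : μ {l : Λ | A a l ≠ B c l} ≤
      μ {l : Λ | A a l ≠ B b l} + (μ {l : Λ | A b l ≠ B c l} + μ {l : Λ | A b l ≠ B b l}) :=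
    (measure_mono hsub).trans ((measure_union_le _ _).trans
      (add_le_add_right (measure_union_le _ _) _))
  rw [h a c, h a b, h b c, h b b] at hle
  have hb : b - b = 0 := sub_self b
  have h1 : Real.sin (a - b) ^ 2 = 1/4 := by
    have : a - b = -(Real.pi/6) := by simp [a, b]
    rw [this, Real.sin_neg, Real.sin_pi_div_six]; ring
  have h2 : Real.sin (b - c) ^ 2 = 1/4 := by
    have : b - c = -(Real.pi/6) := by simp [b, c]; ring
    rw [this, Real.sin_neg, Real.sin_pi_div_six]; ring
  have h3 : Real.sin (a - c) ^ 2 = 3/4 := by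
    have : a - c = -(Real.pi/3) := by simp [a, c]
    rw [this, Real.sin_neg, Real.sin_pi_div_three]
    rw [neg_pow, neg_pow]
    rw [div_pow, Real.sq_sqrt (by norm_num : (3:ℝ) ≥ 0)]
    norm_num
  rw [hb, Real.sin_zero, h1, h2, h3] at hle
  norm_num at hle
  rw [← ENNReal.ofReal_add (by norm_num) (by norm_num)] at hle
  have := ENNReal.ofReal_le_ofReal_iff (by norm_num : ((1:ℝ)/4 + 1/4) ≥ 0) |>.mp hle
  norm_num at this
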